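/- Let T be a dyadic tree decomposition of [0,1]^n: a tree of dyadic cubes rooted at [0,1]^n such that children of any cube Q are subsets of Q, any two cubes in T are disjoint or nested, and for every Q ∈ T, μ(⋃_{B ∈ Child(Q)} B) < μ(Q)/4. Define f: [0,1]^n → ℝ by f = 1 on Q ∖ ⋃_{B ∈ Child(Q)} B when Q has even level, and f = 0 on Q ∖ ⋃_{B ∈ Child(Q)} B when Q has odd level. Then for any Q ∈ T of even level, (1/μ(Q)) ∫_Q f dμ ≥ 3/4, and for any Q ∈ T of odd level, (1/μ(Q)) ∫_Q f dμ ≤ 1/4. -/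

import Mathlib

open MeasureTheory

/-- The half-open dyadic cube of precision `r` at `a`. -/
noncomputable def dCube (n r : ℕ) (a : Fin n → ℤ) : Set (Fin n → ℝ) :=
  Set.univ.pi fun i => Set.Ico ((a i : ℝ) / 2 ^ r) (((a i : ℝ) + 1) / 2 ^ r)

lemma dCube_meas' (n r : ℕ) (a : Fin n → ℤ) : MeasurableSet (dCube n r a) :=
  MeasurableSet.univ_pi fun _ => measurableSet_Ico

lemma dCube_vol' (n r : ℕ) (a : Fin n → ℤ) :
    volume (dCube n r a) = ENNReal.ofReal (1 / 2 ^ r) ^ n := by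
  rw [dCube, volume_pi_pi]
  have : ∀ i, ((a i : ℝ) + 1) / 2 ^ r - (a i : ℝ) / 2 ^ r = 1 / 2 ^ r := fun i => by ring
  simp [Real.volume_Ico, this]

/-- for a dyadic tree decomposition (children contained in their parent,
cubes disjoint or nested, `μ(⋃ Child(Q)) < μ(Q)/4`) and `f` equal to `1` on
`Q ∖ ⋃ Child(Q)` for even-level `Q` and `0` there for odd-level `Q` (with values in
`{0,1}`), the average of `f` over any even-level cube is `≥ 3/4` and over any
odd-level cube is `≤ 1/4`. -/
theorem stmt12 (n : ℕ) (ι : Type) [Countable ι]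
    (cube : ι → Set (Fin n → ℝ)) (level : ι → ℕ) (children : ι → Set ι)
    (hdyadic : ∀ i, ∃ (r : ℕ) (a : Fin n → ℤ), cube i = dCube n r a)
    (hroot : ∃ i0, cube i0 = dCube n 0 0 ∧ level i0 = 0)
    (hchild_sub : ∀ i, ∀ j ∈ children i, cube j ⊆ cube i)
    (hchild_level : ∀ i, ∀ j ∈ children i, level j = level i + 1)
    (hnest : ∀ i j, cube i ∩ cube j = ∅ ∨ cube i ⊆ cube j ∨ cube j ⊆ cube i)
    (hmeas : ∀ i, volume (⋃ j ∈ children i, cube j) < volume (cube i) / 4)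
    (f : (Fin n → ℝ) → ℝ) (hfmeas : Measurable f)
    (hf01 : ∀ x, f x = 0 ∨ f x = 1)
    (hfdef : ∀ i, ∀ x ∈ cube i \ ⋃ j ∈ children i, cube j,
      f x = if Even (level i) then 1 else 0) :
    ∀ i, (Even (level i) →
        (3 : ℝ) / 4 ≤ (∫ x in cube i, f x) / (volume (cube i)).toReal) ∧
      (¬ Even (level i) →
        (∫ x in cube i, f x) / (volume (cube i)).toReal ≤ 1 / 4) := by
  intro i
  obtain ⟨r, a, hQ⟩ := hdyadic i
  set Q := cube i with hQdef
  set U := ⋃ j ∈ children i, cube j with hUdef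
  have hQm : MeasurableSet Q := hQ ▸ dCube_meas' n r a
  have hUm : MeasurableSet U := by
    apply MeasurableSet.biUnion (Set.to_countable _)
    intro j _
    obtain ⟨r', a', h⟩ := hdyadic j
    exact h ▸ dCube_meas' n r' a'
  -- volume facts
  have hfin : volume Q ≠ ⊤ := by
    rw [hQ, dCube_vol']
    exact ENNReal.pow_ne_top ENNReal.ofReal_ne_top
  have hpos : 0 < volume Q := by
    rw [hQ, dCube_vol']
    exact ENNReal.pow_pos (ENNReal.ofReal_pos.mpr (by positivity)) n
  set V := (volume Q).toReal with hVdef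
  have hVpos : 0 < V := ENNReal.toReal_pos hpos.ne' hfin
  -- integrability
  have hbd : ∀ x, ‖f x‖ ≤ 1 := fun x => by rcases hf01 x with h | h <;> simp [h]
  have hint : IntegrableOn f Q := by
    have hfm : IsFiniteMeasure (volume.restrict Q) :=
      ⟨by rw [Measure.restrict_apply_univ]; exact hfin.lt_top⟩
    exact Integrable.mono' (integrable_const 1) hfmeas.aestronglyMeasurable (ae_of_all _ hbd)
  have hsplit : (∫ x in Q ∩ U, f x) + ∫ x in Q \ U, f x = ∫ x in Q, f x :=
    integral_inter_add_diff hUm hint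
  -- measure of intersection
  have hcfin : volume (Q ∩ U) ≠ ⊤ :=
    (lt_of_le_of_lt (measure_mono Set.inter_subset_right) ((hmeas i).trans_le le_top)).ne
  set c := (volume (Q ∩ U)).toReal with hcdef
  have hc4 : c ≤ V / 4 := by
    have h1 : volume (Q ∩ U) ≤ volume Q / 4 :=
      (measure_mono Set.inter_subset_right).trans (hmeas i).le
    have := ENNReal.toReal_mono ((ENNReal.div_lt_top hfin (by norm_num)).ne) h1
    rwa [ENNReal.toReal_div, ENNReal.toReal_ofNat] at this
  have hdiffvol : (volume (Q \ U)).toReal = V - c := by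
    have : Q \ U = Q \ (Q ∩ U) := (Set.diff_self_inter).symm
    rw [this, measure_diff Set.inter_subset_left (hQm.inter hUm).nullMeasurableSet hcfin,
      ENNReal.toReal_sub_of_le (measure_mono Set.inter_subset_left) hfin]
  have hnn : 0 ≤ c := ENNReal.toReal_nonneg
  by_cases hev : Even (level i)
  · refine ⟨fun _ => ?_, fun h => absurd hev h⟩
    have hone : (∫ x in Q \ U, f x) = V - c := by
      rw [setIntegral_congr_fun (hQm.diff hUm) (fun x hx => (hfdef i x hx).trans (if_pos hev)),
        setIntegral_const, smul_eq_mul, mul_one, measureReal_def, hdiffvol]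
    have hge0 : 0 ≤ ∫ x in Q ∩ U, f x :=
      setIntegral_nonneg (hQm.inter hUm) fun x _ => by rcases hf01 x with h | h <;> simp [h]
    rw [le_div_iff₀ hVpos]
    have := hsplit
    nlinarith
  · refine ⟨fun h => absurd h hev, fun _ => ?_⟩
    have hzero : (∫ x in Q \ U, f x) = 0 := by
      rw [setIntegral_congr_fun (hQm.diff hUm) (fun x hx => (hfdef i x hx).trans (if_neg hev))]
      simp
    have hle : (∫ x in Q ∩ U, f x) ≤ c := by
      have : (∫ x in Q ∩ U, f x) ≤ ∫ _x in Q ∩ U, (1 : ℝ) := by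
        apply setIntegral_mono_on (hint.mono_set Set.inter_subset_left)
          (integrableOn_const hcfin) (hQm.inter hUm)
        intro x _; rcases hf01 x with h | h <;> simp [h]
      simpa [smul_eq_mul, measureReal_def] using this
    rw [div_le_iff₀ hVpos]
    nlinarith
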